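/- Every continuous group homomorphism α from the additive group (ℂ, +) to the multiplicative group (ℂ*, ×) is of the form α(z) = exp(a·z + b·z̄) for unique complex numbers a, b, where z̄ denotes complex conjugation. -/

import Mathlib

open intervalIntegral Complex

/-- A continuous multiplicative `ℝ → ℂ` character is `exp (c t)`. -/
lemma key_char (φ : ℝ → ℂ) (h0 : φ 0 = 1)
    (hadd : ∀ s t : ℝ, φ (s + t) = φ s * φ t) (hc : Continuous φ) :
    ∃ c : ℂ, ∀ t : ℝ, φ t = Complex.exp (t * c) := by
  -- find δ > 0 with ‖φ s - 1‖ ≤ 1/2 on [0, δ]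
  obtain ⟨ε, hεpos, hε⟩ := Metric.continuousAt_iff.mp hc.continuousAt (1/2) (by norm_num)
  set δ : ℝ := ε / 2 with hδdef
  have hδpos : 0 < δ := by positivity
  have hsmall : ∀ s ∈ Set.uIoc (0:ℝ) δ, ‖φ s - 1‖ ≤ 1/2 := by
    intro s hs
    rw [Set.uIoc_of_le hδpos.le] at hs
    have : dist s 0 < ε := by
      simp only [Real.dist_eq, sub_zero]
      rw [abs_of_pos hs.1]
      linarith [hs.2]
    have := hε this
    rw [h0] at this
    exact le_of_lt (by simpa [dist_eq_norm] using this)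
  set F : ℝ → ℂ := fun t => ∫ s in (0:ℝ)..t, φ s with hF
  have hint : ∀ a b : ℝ, IntervalIntegrable φ MeasureTheory.volume a b :=
    fun a b => hc.intervalIntegrable a b
  have hFd : ∀ t : ℝ, HasDerivAt F (φ t) t := fun t =>
    integral_hasDerivAt_right (hint 0 t)
      hc.stronglyMeasurable.stronglyMeasurableAtFilter hc.continuousAt
  -- F δ ≠ 0
  have hFδ : F δ ≠ 0 := by
    have h1 : F δ - δ = ∫ s in (0:ℝ)..δ, (φ s - 1) := by
      rw [integral_sub (hint 0 δ) (intervalIntegrable_const)]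
      simp [hF]
    have h2 : ‖F δ - δ‖ ≤ 1/2 * |δ - 0| := by
      rw [h1]
      exact intervalIntegral.norm_integral_le_of_norm_le_const hsmall
    intro h
    rw [h] at h2
    simp only [zero_sub, norm_neg, sub_zero, abs_of_pos hδpos] at h2
    rw [Complex.norm_real, Real.norm_eq_abs, abs_of_pos hδpos] at h2
    linarith
  -- φ t = (F (t + δ) - F t) / F δ
  have hφeq : ∀ t : ℝ, φ t = (F (t + δ) - F t) / F δ := by
    intro t
    have h1 : (∫ s in (0:ℝ)..δ, φ (s + t)) = F δ * φ t := by
      have : ∀ s : ℝ, φ (s + t) = φ s * φ t := fun s => hadd s t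
      simp_rw [this]
      rw [intervalIntegral.integral_mul_const]
    have h2 : (∫ s in (0:ℝ)..δ, φ (s + t)) = F (t + δ) - F t := by
      rw [intervalIntegral.integral_comp_add_right φ t, zero_add]
      have := intervalIntegral.integral_add_adjacent_intervals (hint 0 t) (hint t (δ + t))
      have hc' : δ + t = t + δ := add_comm _ _
      rw [hc'] at this ⊢
      rw [hF]
      dsimp only
      linear_combination this
    rw [h2] at h1
    field_simp [hFδ]
    linear_combination -h1
  set c : ℂ := (φ δ - 1) / F δ with hcdef
  have hφd : ∀ t : ℝ, HasDerivAt φ (φ t * c) t := by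
    intro t
    have h1 : HasDerivAt (fun u : ℝ => F (u + δ)) (φ (t + δ)) t := by
      exact HasDerivAt.comp_add_const t δ (hFd (t + δ))
    have h2 : HasDerivAt (fun u : ℝ => (F (u + δ) - F u) / F δ)
        ((φ (t + δ) - φ t) / F δ) t := (h1.sub (hFd t)).div_const _
    have h3 : HasDerivAt φ ((φ (t + δ) - φ t) / F δ) t := by
      apply h2.congr_of_eventuallyEq
      exact Filter.Eventually.of_forall fun x => hφeq x
    have h4 : (φ (t + δ) - φ t) / F δ = φ t * c := by
      rw [hadd t δ, hcdef]
      field_simp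
    rwa [h4] at h3
  refine ⟨c, fun t => ?_⟩
  have hg : ∀ t : ℝ, HasDerivAt (fun u : ℝ => φ u * Complex.exp (-(u * c)))
      0 t := by
    intro t
    have he : HasDerivAt (fun u : ℝ => Complex.exp (-(u * c))) (-c * Complex.exp (-(t * c))) t := by
      have h1 : HasDerivAt (fun u : ℝ => -((u : ℂ) * c)) (-c) t := by
        have := (Complex.ofRealCLM.hasDerivAt (x := t)).mul_const c
        have h := this.neg
        simp only [Complex.ofRealCLM_apply, Complex.ofReal_one, one_mul] at h
        exact h
      have := h1.cexp
      convert this using 1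
      ring
    have := (hφd t).mul he
    have e0 : φ t * c * Complex.exp (-(t * c)) + φ t * (-c * Complex.exp (-(t * c))) = 0 := by ring
    rw [e0] at this
    exact this
  have hconst : ∀ t : ℝ, φ t * Complex.exp (-(t * c)) = 1 := by
    intro t
    have := is_const_of_deriv_eq_zero (f := fun u : ℝ => φ u * Complex.exp (-(u * c)))
      (fun x => (hg x).differentiableAt) (fun x => (hg x).deriv) t 0
    simpa [h0] using this
  have := hconst t
  have h5 : Complex.exp (-(t * c)) * Complex.exp (t * c) = 1 := by
    rw [← Complex.exp_add]; simp
  calc φ t = φ t * (Complex.exp (-(t * c)) * Complex.exp (t * c)) := by rw [h5, mul_one]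
    _ = (φ t * Complex.exp (-(t * c))) * Complex.exp (t * c) := by ring
    _ = Complex.exp (t * c) := by rw [this, one_mul]


lemma exp_eq_one_forall (c : ℂ) (h : ∀ t : ℝ, Complex.exp ((t : ℂ) * c) = 1) : c = 0 := by
  by_contra hc
  have hn : 0 < ‖c‖ := norm_pos_iff.mpr hc
  set t : ℝ := Real.pi / ‖c‖ with ht
  have htpos : 0 < t := by positivity
  obtain ⟨n, hn2⟩ := Complex.exp_eq_one_iff.mp (h t)
  have hnorm : ‖(t : ℂ) * c‖ = Real.pi := by
    rw [norm_mul, Complex.norm_real, Real.norm_eq_abs, abs_of_pos htpos, ht]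
    rw [div_mul_cancel₀ _ hn.ne']
  rw [hn2] at hnorm
  have h2 : ‖(n : ℂ) * (2 * Real.pi * Complex.I)‖ = (|n| : ℝ) * (2 * Real.pi) := by
    simp [abs_of_pos Real.pi_pos]
  rw [h2] at hnorm
  rcases eq_or_ne n 0 with h0 | h0
  · rw [h0] at hnorm
    simp at hnorm
    linarith [Real.pi_pos]
  · have h1 : (1 : ℝ) ≤ (|n| : ℝ) := by exact_mod_cast Int.one_le_abs h0
    nlinarith [Real.pi_pos]



/-- Every continuous group homomorphism from (ℂ, +) to (ℂ*, ×) is of the form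
z ↦ exp(a z + b z̄) for unique a, b ∈ ℂ. -/
theorem continuous_character_of_complex
    (α : ℂ → ℂ)
    (hne : ∀ z, α z ≠ 0)
    (hhom : ∀ z w, α (z + w) = α z * α w)
    (hcont : Continuous α) :
    ∃! ab : ℂ × ℂ, ∀ z, α z = Complex.exp (ab.1 * z + ab.2 * (starRingEnd ℂ z)) := by
  have hα0 : α 0 = 1 := by
    have h := hhom 0 0
    rw [add_zero] at h
    exact (mul_right_cancel₀ (hne 0) (by rw [one_mul]; exact h)).symm
  obtain ⟨c₁, hc₁⟩ := key_char (fun t : ℝ => α t) (by simpa using hα0)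
    (fun s t => by push_cast; exact hhom s t) (hcont.comp Complex.continuous_ofReal)
  obtain ⟨c₂, hc₂⟩ := key_char (fun t : ℝ => α (t * Complex.I)) (by simpa using hα0)
    (fun s t => by
      have h : ((s + t : ℝ) : ℂ) * Complex.I = s * Complex.I + t * Complex.I := by
        push_cast; ring
      show α (((s + t : ℝ) : ℂ) * Complex.I) = _
      rw [h]; exact hhom _ _)
    (hcont.comp (Complex.continuous_ofReal.mul continuous_const))
  set a : ℂ := (c₁ - Complex.I * c₂) / 2 with ha
  set b : ℂ := (c₁ + Complex.I * c₂) / 2 with hb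
  have hex : ∀ z, α z = Complex.exp (a * z + b * (starRingEnd ℂ) z) := by
    intro z
    have hsplit : α z = α z.re * α (z.im * Complex.I) := by
      rw [← hhom]
      congr 1
      exact (Complex.re_add_im z).symm
    rw [hsplit, hc₁ z.re, hc₂ z.im, ← Complex.exp_add]
    congr 1
    have hzz : (z : ℂ) = (z.re : ℂ) + (z.im : ℂ) * Complex.I := (Complex.re_add_im z).symm
    have hconj : (starRingEnd ℂ) z = (z.re : ℂ) - (z.im : ℂ) * Complex.I := by
      apply Complex.ext <;> simp
    rw [ha, hb]
    linear_combination (-(c₁ - Complex.I * c₂) / 2) * hzz +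
      (-(c₁ + Complex.I * c₂) / 2) * hconj + ((z.im : ℂ) * c₂) * Complex.I_sq
  refine ⟨(a, b), hex, ?_⟩
  rintro ⟨a', b'⟩ h'
  have h1 : ∀ z, Complex.exp ((a' - a) * z + (b' - b) * (starRingEnd ℂ) z) = 1 := by
    intro z
    rw [show (a' - a) * z + (b' - b) * (starRingEnd ℂ) z =
        (a' * z + b' * (starRingEnd ℂ) z) - (a * z + b * (starRingEnd ℂ) z) by ring,
      Complex.exp_sub, ← h' z, ← hex z, div_self (hne z)]
  have e1 : a' - a + (b' - b) = 0 := by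
    apply exp_eq_one_forall
    intro t
    have e : (t : ℂ) * (a' - a + (b' - b)) =
        (a' - a) * t + (b' - b) * (starRingEnd ℂ) (t : ℂ) := by
      rw [Complex.conj_ofReal]; ring
    rw [e]; exact h1 t
  have e2 : (a' - a - (b' - b)) * Complex.I = 0 := by
    apply exp_eq_one_forall
    intro t
    have e : (t : ℂ) * ((a' - a - (b' - b)) * Complex.I) =
        (a' - a) * ((t : ℂ) * Complex.I) + (b' - b) * (starRingEnd ℂ) ((t : ℂ) * Complex.I) := by
      rw [map_mul, Complex.conj_ofReal, Complex.conj_I]; ring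
    rw [e]; exact h1 _
  have e3 : a' - a - (b' - b) = 0 := by
    rcases mul_eq_zero.mp e2 with h | h
    · exact h
    · exact absurd h Complex.I_ne_zero
  have ha' : a' = a := by linear_combination (e1 + e3) / 2
  have hb' : b' = b := by linear_combination (e1 - e3) / 2
  simp [ha', hb']
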